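/- In ℂ[z1, z3, w1, w3], let H0 = −Δ·z1·w1 + Δ·z3·w3, H2 = ε·(z1·w1 + z3·w3) + 2AN·(z1·z3 + w1·w3), and H4 = A·[(1/2)·z1²·w1² − 2·z1·w1·z3·w3 + (1/2)·z3²·w3² − 2·(z1·w1 + z3·w3)·(z1·z3 + w1·w3)], where Δ, ε, A, N are real parameters. Then {H2, H0} = 0 and {H4, H0} = 0, i.e. the quadratic and quartic parts of the truncated normal form Poisson-commute with H0. -/
import Mathlib


open MvPolynomial

/-- The Poisson bracket on `ℂ[z₁, z₃, w₁, w₃]`, with variables indexed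
`z₁ = X 0`, `z₃ = X 1`, `w₁ = X 2`, `w₃ = X 3`:
`{F,G} = i[(∂F/∂w₁)(∂G/∂z₁) − (∂F/∂z₁)(∂G/∂w₁) + (∂F/∂w₃)(∂G/∂z₃) − (∂F/∂z₃)(∂G/∂w₃)]`. -/
noncomputable def pbracket (F G : MvPolynomial (Fin 4) ℂ) : MvPolynomial (Fin 4) ℂ :=
  C Complex.I *
    (pderiv 2 F * pderiv 0 G - pderiv 0 F * pderiv 2 G
      + pderiv 3 F * pderiv 1 G - pderiv 1 F * pderiv 3 G)

/-- `H₀ = −Δ z₁ w₁ + Δ z₃ w₃`. -/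
noncomputable def H0poly (Δ : ℝ) : MvPolynomial (Fin 4) ℂ :=
  C (-(Δ : ℂ)) * (X 0 * X 2) + C ((Δ : ℂ)) * (X 1 * X 3)

/-- `H₂ = ε(z₁w₁ + z₃w₃) + 2AN(z₁z₃ + w₁w₃)`. -/
noncomputable def H2poly (ε A N : ℝ) : MvPolynomial (Fin 4) ℂ :=
  C ((ε : ℂ)) * (X 0 * X 2 + X 1 * X 3)
    + C ((2 * A * N : ℝ) : ℂ) * (X 0 * X 1 + X 2 * X 3)

/-- `H₄ = A[(1/2)z₁²w₁² − 2z₁w₁z₃w₃ + (1/2)z₃²w₃² − 2(z₁w₁+z₃w₃)(z₁z₃+w₁w₃)]`. -/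
noncomputable def H4poly (A : ℝ) : MvPolynomial (Fin 4) ℂ :=
  C ((A : ℂ)) *
    (C ((1 : ℂ) / 2) * (X 0) ^ 2 * (X 2) ^ 2
      - 2 * (X 0 * X 2 * (X 1 * X 3))
      + C ((1 : ℂ) / 2) * (X 1) ^ 2 * (X 3) ^ 2
      - 2 * (X 0 * X 2 + X 1 * X 3) * (X 0 * X 1 + X 2 * X 3))

lemma pderiv_two (i : Fin 4) : pderiv i (2 : MvPolynomial (Fin 4) ℂ) = 0 := by
  have : (2 : MvPolynomial (Fin 4) ℂ) = C 2 := by rw [map_ofNat]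
  rw [this, pderiv_C]

/-- The quadratic and quartic parts of the truncated normal form
Poisson-commute with `H₀`. -/
theorem normal_form_commutes (Δ ε A N : ℝ) :
    pbracket (H2poly ε A N) (H0poly Δ) = 0 ∧
    pbracket (H4poly A) (H0poly Δ) = 0 := by
  constructor <;>
  · simp only [pbracket, H0poly, H2poly, H4poly]
    simp [pderiv_mul, pderiv_X, pderiv_two, Pi.single_apply]
    ring
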